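/- If a search T of a PTS S has not found a violation of an LTL+ formula φ, then the measure of the fully explored execution paths of the minimal extension is a lower bound on the progress: μ_{S_T}(T^ω ∩ Exec_{S_T}) ≤ prog_S(T, φ). -/

import Mathlib

open MeasureTheory

/- ## LTL⁺ syntax and semantics -/

inductive LTLPlus (AP : Type) : Type where
  | tt : LTLPlus AP
  | ff : LTLPlus AP
  | atom : AP → LTLPlus AP
  | and : LTLPlus AP → LTLPlus AP → LTLPlus AP
  | or : LTLPlus AP → LTLPlus AP → LTLPlus AP
  | next : LTLPlus AP → LTLPlus AP
  | untl : LTLPlus AP → LTLPlus AP → LTLPlus AP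
  | release : LTLPlus AP → LTLPlus AP → LTLPlus AP

variable {AP : Type}

/-- The suffix `ρ[k…]` of an infinite word. -/
def shift (ρ : ℕ → Set AP) (k : ℕ) : ℕ → Set AP := fun n => ρ (n + k)

/-- Standard LTL satisfaction for the positive fragment. -/
def LTLSat : LTLPlus AP → (ℕ → Set AP) → Prop
  | .tt, _ => True
  | .ff, _ => False
  | .atom a, ρ => a ∈ ρ 0
  | .and φ ψ, ρ => LTLSat φ ρ ∧ LTLSat ψ ρ
  | .or φ ψ, ρ => LTLSat φ ρ ∨ LTLSat ψ ρ
  | .next φ, ρ => LTLSat φ (shift ρ 1)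
  | .untl φ ψ, ρ => ∃ j, LTLSat ψ (shift ρ j) ∧ ∀ i < j, LTLSat φ (shift ρ i)
  | .release φ ψ, ρ => ∀ j, LTLSat ψ (shift ρ j) ∨ ∃ i < j, LTLSat φ (shift ρ i)

/-- Concatenation `σρ` of a finite word with an infinite word. -/
def wcat (σ : List (Set AP)) (ρ : ℕ → Set AP) : ℕ → Set AP :=
  fun n => if h : n < σ.length then σ.get ⟨n, h⟩ else ρ (n - σ.length)

/- ## Probabilistic transition systems -/

variable {State Tr : Type}

structure PTS (State Tr AP : Type) where
  states : Set State
  transitions : Set Tr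
  countable_states : states.Countable
  countable_transitions : transitions.Countable
  init : State
  init_mem : init ∈ states
  source : Tr → State
  target : Tr → State
  prob : Tr → ℝ
  label : State → Set AP
  source_mem : ∀ t ∈ transitions, source t ∈ states
  target_mem : ∀ t ∈ transitions, target t ∈ states
  prob_pos : ∀ t ∈ transitions, 0 < prob t
  prob_le_one : ∀ t ∈ transitions, prob t ≤ 1
  prob_sum : ∀ s ∈ states,
    (∑' t : { t : Tr // t ∈ transitions ∧ source t = s }, prob t.1) = 1

/-- An execution path: an infinite sequence of transitions starting at the
initial state, with matching targets and sources. -/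
def PTS.IsExec (S : PTS State Tr AP) (e : ℕ → Tr) : Prop :=
  (∀ i, e i ∈ S.transitions) ∧ S.source (e 0) = S.init ∧
    ∀ i, S.target (e i) = S.source (e (i + 1))

/-- The finite sequence `l` is a prefix of the infinite sequence `e`. -/
def IsPrefixOf (l : List Tr) (e : ℕ → Tr) : Prop :=
  ∀ i : ℕ, ∀ h : i < l.length, l.get ⟨i, h⟩ = e i

/-- `l` is a finite prefix of some execution path of `S`, i.e. `l ∈ pref(Exec_S)`. -/
def PTS.IsPrefExec (S : PTS State Tr AP) (l : List Tr) : Prop :=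
  ∃ e, S.IsExec e ∧ IsPrefixOf l e

/-- The basic cylinder set `B_S^l` of a finite sequence of transitions. -/
def PTS.Cyl (S : PTS State Tr AP) (l : List Tr) : Set (ℕ → Tr) :=
  { e | S.IsExec e ∧ IsPrefixOf l e }

/-- `S'` extends the search `T` of `S`. -/
def PTS.Extends (S' S : PTS State Tr AP) (T : Finset Tr) : Prop :=
  (∀ t ∈ T, t ∈ S'.transitions) ∧ S'.init = S.init ∧
    ∀ t ∈ T, S'.source t = S.source t ∧ S'.target t = S.target t ∧
      S'.prob t = S.prob t ∧
      S'.label (S'.source t) = S.label (S.source t) ∧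
      S'.label (S'.target t) = S.label (S.target t)

/-- The trace of an execution path. -/
def PTS.traceOf (S : PTS State Tr AP) (e : ℕ → Tr) : ℕ → Set AP :=
  fun i => S.label (S.source (e i))

/-- Satisfaction `e ⊨_S φ` of a linear-time property (a set of infinite words). -/
def PTS.SatPath (S : PTS State Tr AP) (e : ℕ → Tr) (φ : Set (ℕ → Set AP)) : Prop :=
  S.traceOf e ∈ φ

instance : MeasurableSpace (ℕ → Tr) := ⊤

/-- `μ` behaves as the cylinder measure of the PTS `S`:
`μ(B_S^{t₁…tₙ}) = Π prob(tᵢ)`. -/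
def CylSpec (S : PTS State Tr AP) (μ : Measure (ℕ → Tr)) : Prop :=
  ∀ l : List Tr, S.IsPrefExec l →
    μ (S.Cyl l) = ENNReal.ofReal ((l.map S.prob).prod)

/-- The set `B_S^φ(T)`: union of the basic cylinder sets over `e ∈ T*` all of
whose execution paths satisfy `φ`. -/
def PTS.BPhi (S : PTS State Tr AP) (T : Finset Tr) (φ : Set (ℕ → Set AP)) :
    Set (ℕ → Tr) :=
  ⋃ l ∈ { l : List Tr | (∀ t ∈ l, t ∈ T) ∧ ∀ e ∈ S.Cyl l, S.SatPath e φ }, S.Cyl l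

/-- The set `E_S^φ(T)`. -/
def PTS.ESet (S : PTS State Tr AP) (T : Finset Tr) (φ : Set (ℕ → Set AP)) :
    Set (List Tr) :=
  { l | (∀ t ∈ l, t ∈ T) ∧ S.IsPrefExec l ∧ ∀ e ∈ S.Cyl l, S.SatPath e φ }

/-- The set `ME_S^φ(T)` of prefix-minimal elements of `E_S^φ(T)`. -/
def PTS.MESet (S : PTS State Tr AP) (T : Finset Tr) (φ : Set (ℕ → Set AP)) :
    Set (List Tr) :=
  { l ∈ S.ESet T φ | 0 < l.length → ∃ e ∈ S.Cyl l.dropLast, ¬ S.SatPath e φ }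

/-- The progress measure, relative to an assignment `M` of (cylinder) measures
to PTSs: the infimum over all extensions `S'` of `T` of `μ_{S'}(B_{S'}^φ(T))`. -/
noncomputable def progM (M : PTS State Tr AP → Measure (ℕ → Tr))
    (S : PTS State Tr AP) (T : Finset Tr) (φ : Set (ℕ → Set AP)) : ENNReal :=
  ⨅ S' : { S' : PTS State Tr AP // S'.Extends S T }, M S'.1 ((S'.1).BPhi T φ)

/-- The search `T` of `S` has not found a violation of `φ`. -/
def NotFoundViolation (S : PTS State Tr AP) (T : Finset Tr)
    (φ : Set (ℕ → Set AP)) : Prop :=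
  ∃ S' : PTS State Tr AP, S'.Extends S T ∧ ∀ e, S'.IsExec e → S'.SatPath e φ

/- ## The minimal extension S_T -/

open Classical in
/-- `out_S(s)`: total explored outgoing probability of `s`. -/
noncomputable def outP (S : PTS State Tr AP) (T : Finset Tr) (s : State) : ℝ :=
  ∑ t ∈ T.filter (fun t => S.source t = s), S.prob t

/-- The set `S^T_S` of explored states. -/
def STStates (S : PTS State Tr AP) (T : Finset Tr) : Set State :=
  S.source '' ↑T ∪ S.target '' ↑T ∪ {S.init}

/-- `ST` is (a copy of) the minimal extension `S_T` of the search `T` of `S`: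
it has the explored states plus a fresh sink state `s⊥` with empty label and a
probability-one self loop `t⊥`, the explored transitions with unchanged data,
and, for each explored state with explored outgoing probability less than one,
a fresh transition to the sink carrying the residual probability. -/
def IsMinExt (S : PTS State Tr AP) (T : Finset Tr) (ST : PTS State Tr AP) : Prop :=
  ∃ (sbot : State) (tbot : Tr) (ts : State → Tr),
    sbot ∉ STStates S T ∧
    (∀ s, ts s ∉ T) ∧ tbot ∉ T ∧ (∀ s, ts s ≠ tbot) ∧
    Set.InjOn ts { s ∈ STStates S T | outP S T s < 1 } ∧
    ST.states = STStates S T ∪ {sbot} ∧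
    ST.transitions = ↑T ∪ ts '' { s ∈ STStates S T | outP S T s < 1 } ∪ {tbot} ∧
    ST.init = S.init ∧
    (∀ t ∈ T, ST.source t = S.source t ∧ ST.target t = S.target t ∧
      ST.prob t = S.prob t) ∧
    (∀ s ∈ STStates S T, outP S T s < 1 →
      ST.source (ts s) = s ∧ ST.target (ts s) = sbot ∧
      ST.prob (ts s) = 1 - outP S T s) ∧
    ST.source tbot = sbot ∧ ST.target tbot = sbot ∧ ST.prob tbot = 1 ∧
    ST.label sbot = ∅ ∧ (∀ s ∈ STStates S T, ST.label s = S.label s)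

/- ## Truncations and the prefix metric -/

/-- `e[n]`: the execution path `e` truncated at length `n`. -/
def trunc (e : ℕ → Tr) (n : ℕ) : List Tr := (List.range n).map e

/-- The distance `d(e₁,e₂) = inf { 2^{-n} : e₁[n] = e₂[n] }`. -/
noncomputable def pathDist (e₁ e₂ : ℕ → Tr) : ℝ :=
  sInf ((fun n : ℕ => ((1 : ℝ) / 2) ^ n) '' { n | trunc e₁ n = trunc e₂ n })

/-- `A` is closed with respect to the metric `pathDist`. -/
def ClosedPaths (A : Set (ℕ → Tr)) : Prop :=
  ∀ e, (∀ ε : ℝ, 0 < ε → ∃ e' ∈ A, pathDist e' e < ε) → e ∈ A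


/- ## Auxiliary machinery for the proof -/

section AuxLTL

variable {AP : Type}

/-- LTL⁺ formulas are monotone with respect to pointwise inclusion of traces. -/
theorem ltlsat_mono (φ : LTLPlus AP) : ∀ (ρ σ : ℕ → Set AP),
    (∀ n, ρ n ⊆ σ n) → LTLSat φ ρ → LTLSat φ σ := by
  induction φ with
  | tt => intro ρ σ h hs; trivial
  | ff => intro ρ σ h hs; exact hs.elim
  | atom a => intro ρ σ h hs; exact h 0 hs
  | and φ ψ ihφ ihψ => intro ρ σ h hs; exact ⟨ihφ ρ σ h hs.1, ihψ ρ σ h hs.2⟩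
  | or φ ψ ihφ ihψ =>
      intro ρ σ h hs
      rcases hs with hs | hs
      · exact Or.inl (ihφ ρ σ h hs)
      · exact Or.inr (ihψ ρ σ h hs)
  | next φ ihφ =>
      intro ρ σ h hs
      exact ihφ _ _ (fun n => h (n + 1)) hs
  | untl φ ψ ihφ ihψ =>
      intro ρ σ h hs
      obtain ⟨j, hj, hlt⟩ := hs
      exact ⟨j, ihψ _ _ (fun n => h (n + j)) hj,
        fun i hi => ihφ _ _ (fun n => h (n + i)) (hlt i hi)⟩
  | release φ ψ ihφ ihψ =>
      intro ρ σ h hs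
      intro j
      rcases hs j with hj | ⟨i, hi, hφi⟩
      · exact Or.inl (ihψ _ _ (fun n => h (n + j)) hj)
      · exact Or.inr ⟨i, hi, ihφ _ _ (fun n => h (n + i)) hφi⟩

end AuxLTL

section AuxPTS

variable {State Tr AP : Type}

theorem trunc_length (e : ℕ → Tr) (n : ℕ) : (trunc e n).length = n := by
  simp [trunc]

theorem trunc_get (e : ℕ → Tr) (n : ℕ) (i : ℕ) (h : i < (trunc e n).length) :
    (trunc e n).get ⟨i, h⟩ = e i := by
  simp [trunc]

theorem isPrefixOf_trunc (e : ℕ → Tr) (n : ℕ) : IsPrefixOf (trunc e n) e := by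
  intro i h
  exact trunc_get e n i h

/-- The set of lists of a given length with entries in a finset is finite. -/
theorem finite_Tlists (T : Finset Tr) (n : ℕ) :
    {l : List Tr | l.length = n ∧ ∀ t ∈ l, t ∈ T}.Finite := by
  induction n with
  | zero =>
      apply Set.Finite.subset (Set.finite_singleton ([] : List Tr))
      rintro l ⟨hl, -⟩
      simp [List.length_eq_zero_iff.mp hl]
  | succ n ih =>
      have : {l : List Tr | l.length = n + 1 ∧ ∀ t ∈ l, t ∈ T} ⊆
          (fun p : Tr × List Tr => p.1 :: p.2) ''
            ((↑T : Set Tr) ×ˢ {l : List Tr | l.length = n ∧ ∀ t ∈ l, t ∈ T}) := by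
        rintro l ⟨hl, hmem⟩
        cases l with
        | nil => simp at hl
        | cons a l' =>
            refine ⟨⟨a, l'⟩, ⟨?_, ?_, ?_⟩, rfl⟩
            · exact hmem a (by simp)
            · simpa using hl
            · exact fun t ht => hmem t (by simp [ht])
      exact Set.Finite.subset (Set.Finite.image _ ((T.finite_toSet).prod ih)) this

/-- Two distinct lists of the same length have disjoint cylinder sets. -/
theorem cyl_disjoint (S : PTS State Tr AP) {l₁ l₂ : List Tr}
    (hlen : l₁.length = l₂.length) (hne : l₁ ≠ l₂) :
    Disjoint (S.Cyl l₁) (S.Cyl l₂) := by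
  rw [Set.disjoint_left]
  rintro e ⟨-, h₁⟩ ⟨-, h₂⟩
  apply hne
  apply List.ext_get hlen
  intro i hi₁ hi₂
  rw [h₁ i hi₁, h₂ i hi₂]

/-- Finite additivity over a finset of same-length cylinders. -/
theorem measure_biUnion_cyls (μ : Measure (ℕ → Tr)) (S : PTS State Tr AP)
    (n : ℕ) (G : Finset (List Tr)) (hlen : ∀ l ∈ G, l.length = n) :
    μ (⋃ l ∈ G, S.Cyl l) = ∑ l ∈ G, μ (S.Cyl l) := by
  apply measure_biUnion_finset
  · intro l₁ h₁ l₂ h₂ hne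
    exact cyl_disjoint S (by rw [hlen l₁ h₁, hlen l₂ h₂]) hne
  · intro l _
    exact MeasurableSpace.measurableSet_top

end AuxPTS

section AuxWord

variable {State Tr AP : Type}

/-- A finite word of transitions of `S''` starting at state `s`. -/
def WordOK (S'' : PTS State Tr AP) : State → List Tr → Prop
  | _, [] => True
  | s, t :: l => t ∈ S''.transitions ∧ S''.source t = s ∧ WordOK S'' (S''.target t) l

/-- The end state of a finite word started at `s`. -/
def endSt (S'' : PTS State Tr AP) : State → List Tr → State
  | s, [] => s
  | _, t :: l => endSt S'' (S''.target t) l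

theorem wordOK_append (S'' : PTS State Tr AP) :
    ∀ (l₁ l₂ : List Tr) (s : State),
      WordOK S'' s (l₁ ++ l₂) ↔ WordOK S'' s l₁ ∧ WordOK S'' (endSt S'' s l₁) l₂ := by
  intro l₁
  induction l₁ with
  | nil => intro l₂ s; simp [WordOK, endSt]
  | cons t l ih =>
      intro l₂ s
      simp only [List.cons_append, WordOK, endSt]
      rw [ih l₂ (S''.target t)]
      tauto

theorem endSt_append (S'' : PTS State Tr AP) :
    ∀ (l₁ l₂ : List Tr) (s : State),
      endSt S'' s (l₁ ++ l₂) = endSt S'' (endSt S'' s l₁) l₂ := by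
  intro l₁
  induction l₁ with
  | nil => intro l₂ s; simp [endSt]
  | cons t l ih => intro l₂ s; simp [endSt, ih]

/-- Gluing a finite word and an infinite path. -/
def glue (l : List Tr) (f : ℕ → Tr) : ℕ → Tr :=
  fun n => if h : n < l.length then l.get ⟨n, h⟩ else f (n - l.length)

theorem glue_lt (l : List Tr) (f : ℕ → Tr) (n : ℕ) (h : n < l.length) :
    glue l f n = l.get ⟨n, h⟩ := by simp [glue, h]

theorem glue_ge (l : List Tr) (f : ℕ → Tr) (n : ℕ) (h : l.length ≤ n) :
    glue l f n = f (n - l.length) := by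
  simp [glue, Nat.not_lt.mpr h]

theorem isPrefixOf_glue (l : List Tr) (f : ℕ → Tr) : IsPrefixOf l (glue l f) := by
  intro i h
  rw [glue_lt l f i h]

/-- An "execution from `s`" (not necessarily from the initial state). -/
def IsExecFrom (S'' : PTS State Tr AP) (s : State) (f : ℕ → Tr) : Prop :=
  (∀ i, f i ∈ S''.transitions) ∧ S''.source (f 0) = s ∧
    ∀ i, S''.target (f i) = S''.source (f (i + 1))

theorem glue_execFrom (S'' : PTS State Tr AP) :
    ∀ (l : List Tr) (s : State) (f : ℕ → Tr), WordOK S'' s l →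
      IsExecFrom S'' (endSt S'' s l) f → IsExecFrom S'' s (glue l f) := by
  intro l
  induction l with
  | nil =>
      intro s f _ hf
      have : glue [] f = f := by
        funext n; simp [glue]
      rw [this]
      simpa [endSt] using hf
  | cons t l ih =>
      intro s f hw hf
      obtain ⟨ht, hsrc, hw'⟩ := hw
      have hrec : IsExecFrom S'' (S''.target t) (glue l f) :=
        ih (S''.target t) f hw' (by simpa [endSt] using hf)
      have hg : ∀ n, glue (t :: l) f (n + 1) = glue l f n := by
        intro n
        by_cases h : n < l.length
        · rw [glue_lt l f n h, glue_lt (t :: l) f (n + 1) (by simpa using Nat.succ_lt_succ h)]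
          simp
        · rw [glue_ge l f n (Nat.not_lt.mp h),
            glue_ge (t :: l) f (n + 1) (by simpa using Nat.succ_le_succ (Nat.not_lt.mp h))]
          simp [Nat.succ_sub_succ]
      have hg0 : glue (t :: l) f 0 = t := by
        rw [glue_lt (t :: l) f 0 (by simp)]
        simp
      refine ⟨?_, ?_, ?_⟩
      · intro i
        cases i with
        | zero => rw [hg0]; exact ht
        | succ n => rw [hg n]; exact hrec.1 n
      · rw [hg0]; exact hsrc
      · intro i
        cases i with
        | zero =>
            rw [hg0, hg 0]
            have := hrec.2.1
            rw [this]
        | succ n =>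
            rw [hg n, hg (n + 1)]
            exact hrec.2.2 n

theorem isExec_of_execFrom (S'' : PTS State Tr AP) (f : ℕ → Tr)
    (h : IsExecFrom S'' S''.init f) : S''.IsExec f := h

/-- Every state of a PTS has an outgoing transition. -/
theorem exists_out (S'' : PTS State Tr AP) (s : State) (hs : s ∈ S''.states) :
    ∃ t, t ∈ S''.transitions ∧ S''.source t = s := by
  by_contra h
  push_neg at h
  have hempty : IsEmpty { t : Tr // t ∈ S''.transitions ∧ S''.source t = s } := by
    constructor
    rintro ⟨t, ht, hsrc⟩
    exact h t ht hsrc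
  have := S''.prob_sum s hs
  rw [tsum_empty] at this
  norm_num at this

/-- From any state there is an infinite execution. -/
theorem exists_execFrom (S'' : PTS State Tr AP) (s : State) (hs : s ∈ S''.states) :
    ∃ f, IsExecFrom S'' s f := by
  classical
  -- build the sequence of (state, proof) pairs by recursion
  let pick : {s // s ∈ S''.states} → Tr := fun p => (exists_out S'' p.1 p.2).choose
  have pick_mem : ∀ p, pick p ∈ S''.transitions := fun p => (exists_out S'' p.1 p.2).choose_spec.1
  have pick_src : ∀ p, S''.source (pick p) = p.1 := fun p => (exists_out S'' p.1 p.2).choose_spec.2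
  let st : ℕ → {s // s ∈ S''.states} := fun n =>
    Nat.rec (⟨s, hs⟩ : {s // s ∈ S''.states})
      (fun _ p => ⟨S''.target (pick p), S''.target_mem _ (pick_mem p)⟩) n
  refine ⟨fun n => pick (st n), fun i => pick_mem _, ?_, ?_⟩
  · exact pick_src _
  · intro i
    have : st (i + 1) = ⟨S''.target (pick (st i)), S''.target_mem _ (pick_mem (st i))⟩ := rfl
    rw [pick_src (st (i + 1)), this]

end AuxWord

section AuxTWord

variable {State Tr AP : Type}

/-- A finite word of explored transitions (in `T`), with data taken in `S`. -/
def TWord (S : PTS State Tr AP) (T : Finset Tr) : State → List Tr → Prop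
  | _, [] => True
  | s, t :: l => t ∈ T ∧ S.source t = s ∧ TWord S T (S.target t) l

theorem tword_append (S : PTS State Tr AP) (T : Finset Tr) :
    ∀ (l₁ l₂ : List Tr) (s : State),
      TWord S T s (l₁ ++ l₂) ↔ TWord S T s l₁ ∧ TWord S T (endSt S s l₁) l₂ := by
  intro l₁
  induction l₁ with
  | nil => intro l₂ s; simp [TWord, endSt]
  | cons t l ih =>
      intro l₂ s
      simp only [List.cons_append, TWord, endSt]
      rw [ih l₂ (S.target t)]
      tauto

theorem tword_memT (S : PTS State Tr AP) (T : Finset Tr) :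
    ∀ (l : List Tr) (s : State), TWord S T s l → ∀ t ∈ l, t ∈ T := by
  intro l
  induction l with
  | nil => intro s _ t ht; simp at ht
  | cons a l ih =>
      rintro s ⟨ha, -, hl⟩ t ht
      rcases List.mem_cons.mp ht with rfl | ht
      · exact ha
      · exact ih _ hl t ht

theorem tword_wordOK (S S'' : PTS State Tr AP) (T : Finset Tr)
    (hTsub : ∀ t ∈ T, t ∈ S''.transitions)
    (hagree : ∀ t ∈ T, S''.source t = S.source t ∧ S''.target t = S.target t) :
    ∀ (l : List Tr) (s : State), TWord S T s l →
      WordOK S'' s l ∧ endSt S'' s l = endSt S s l := by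
  intro l
  induction l with
  | nil => intro s _; exact ⟨trivial, rfl⟩
  | cons t l ih =>
      rintro s ⟨ht, hsrc, hl⟩
      obtain ⟨h₁, h₂⟩ := ih (S.target t) hl
      have htgt : S''.target t = S.target t := (hagree t ht).2
      refine ⟨⟨hTsub t ht, by rw [(hagree t ht).1, hsrc], ?_⟩, ?_⟩
      · rw [htgt]; exact h₁
      · show endSt S'' (S''.target t) l = endSt S (S.target t) l
        rw [htgt]; exact h₂

theorem endSt_mem (S : PTS State Tr AP) (T : Finset Tr) (V : Finset State)
    (htgt : ∀ t ∈ T, S.target t ∈ V) :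
    ∀ (l : List Tr) (s : State), TWord S T s l → s ∈ V → endSt S s l ∈ V := by
  intro l
  induction l with
  | nil => intro s _ hs; exact hs
  | cons t l ih =>
      rintro s ⟨ht, -, hl⟩ _
      exact ih _ hl (htgt t ht)

theorem tword_trunc (S S'' : PTS State Tr AP) (T : Finset Tr)
    (hagree : ∀ t ∈ T, S''.source t = S.source t ∧ S''.target t = S.target t)
    (hinit : S''.init = S.init) (e : ℕ → Tr) (hex : S''.IsExec e) :
    ∀ n, (∀ i < n, e i ∈ T) →
      TWord S T S.init (trunc e n) ∧ endSt S S.init (trunc e n) = S''.source (e n) := by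
  intro n
  induction n with
  | zero =>
      intro _
      constructor
      · simp [trunc, TWord]
      · simp only [trunc, List.range_zero, List.map_nil, endSt]
        rw [hex.2.1, hinit]
  | succ n ih =>
      intro hmem
      obtain ⟨h₁, h₂⟩ := ih (fun i hi => hmem i (Nat.lt_succ_of_lt hi))
      have hen : e n ∈ T := hmem n (Nat.lt_succ_self n)
      have htr : trunc e (n + 1) = trunc e n ++ [e n] := by
        simp [trunc, List.range_succ]
      constructor
      · rw [htr, tword_append]
        refine ⟨h₁, hen, ?_, trivial⟩
        rw [h₂, (hagree _ hen).1]
      · rw [htr, endSt_append]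
        show endSt S (S.target (e n)) [] = _
        simp only [endSt]
        rw [← (hagree _ hen).2, hex.2.2 n]

theorem tword_shorten_aux (S : PTS State Tr AP) (T : Finset Tr) (V : Finset State)
    (htgt : ∀ t ∈ T, S.target t ∈ V) (P : State → Prop) (n : ℕ)
    (ih : ∀ (l : List Tr) (s : State), l.length ≤ n → s ∈ V → TWord S T s l →
      P (endSt S s l) → ∃ q, TWord S T s q ∧ P (endSt S s q) ∧ q.length < V.card)
    (l : List Tr) (s : State) (hlen : l.length ≤ n + 1) (hs : s ∈ V)
    (hw : TWord S T s l) (hP : P (endSt S s l)) (x y : ℕ)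
    (hx : x < V.card + 1) (hy : y < V.card + 1) (hlt : x < y)
    (hfeq : endSt S s (l.take x) = endSt S s (l.take y))
    (hshort : V.card ≤ l.length) :
    ∃ q, TWord S T s q ∧ P (endSt S s q) ∧ q.length < V.card := by
  have hyl : y ≤ l.length := le_trans (Nat.lt_succ_iff.mp hy) hshort
  have hxl : x ≤ l.length := le_trans (le_of_lt hlt) hyl
  have hly : l = l.take y ++ l.drop y := (List.take_append_drop y l).symm
  have hw2 : TWord S T s (l.take y) ∧ TWord S T (endSt S s (l.take y)) (l.drop y) := by
    rw [← tword_append]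
    rw [← hly]
    exact hw
  have htx : TWord S T s (l.take x) := by
    have h1 : l.take x = (l.take y).take x := by
      rw [List.take_take, min_eq_left (le_of_lt hlt)]
    have h2 : l.take y = (l.take y).take x ++ (l.take y).drop x :=
      (List.take_append_drop x (l.take y)).symm
    rw [h1]
    have := hw2.1
    rw [h2, tword_append] at this
    exact this.1
  refine ih (l.take x ++ l.drop y) s ?_ hs ?_ ?_
  · rw [List.length_append, List.length_take, List.length_drop]
    omega
  · rw [tword_append]
    exact ⟨htx, by rw [hfeq]; exact hw2.2⟩
  · rw [endSt_append, hfeq, ← endSt_append, ← hly]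
    exact hP

/-- Pigeonhole: a word reaching a state satisfying `P` can be shortened below
the number of states. -/
theorem tword_shorten (S : PTS State Tr AP) (T : Finset Tr) (V : Finset State)
    (htgt : ∀ t ∈ T, S.target t ∈ V) (P : State → Prop) :
    ∀ (n : ℕ) (l : List Tr) (s : State), l.length ≤ n → s ∈ V → TWord S T s l →
      P (endSt S s l) → ∃ q, TWord S T s q ∧ P (endSt S s q) ∧ q.length < V.card := by
  intro n
  induction n with
  | zero =>
      intro l s hlen hs hw hP
      refine ⟨l, hw, hP, ?_⟩
      have : l.length = 0 := Nat.le_zero.mp hlen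
      rw [this]
      exact Finset.card_pos.mpr ⟨s, hs⟩
  | succ n ih =>
      intro l s hlen hs hw hP
      by_cases hshort : l.length < V.card
      · exact ⟨l, hw, hP, hshort⟩
      · push_neg at hshort
        -- pigeonhole on the endpoints of prefixes
        have hmaps : ∀ i ∈ Finset.range (V.card + 1), endSt S s (l.take i) ∈ V := by
          intro i _
          apply endSt_mem S T V htgt _ s _ hs
          have : l = l.take i ++ l.drop i := (List.take_append_drop i l).symm
          rw [this] at hw
          exact ((tword_append S T _ _ s).mp hw).1
        obtain ⟨x, hx, y, hy, hxy, hfeq⟩ :=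
          Finset.exists_ne_map_eq_of_card_lt_of_maps_to
            (by rw [Finset.card_range]; exact Nat.lt_succ_self _) hmaps
        -- wlog x < y
        rcases Ne.lt_or_gt hxy with hlt | hlt
        case _ =>
          exact tword_shorten_aux S T V htgt P n ih l s hlen hs hw hP x y
            (Finset.mem_range.mp hx) (Finset.mem_range.mp hy) hlt hfeq hshort
        case _ =>
          exact tword_shorten_aux S T V htgt P n ih l s hlen hs hw hP y x
            (Finset.mem_range.mp hy) (Finset.mem_range.mp hx) hlt hfeq.symm hshort

end AuxTWord

section AuxSum

variable {State Tr AP : Type}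

/-- Any finite set of transitions out of a state has total probability at most one. -/
theorem sum_prob_le_one (S'' : PTS State Tr AP) (s : State) (hs : s ∈ S''.states)
    (F : Finset Tr) (hF : ∀ t ∈ F, t ∈ S''.transitions ∧ S''.source t = s) :
    ∑ t ∈ F, S''.prob t ≤ 1 := by
  classical
  have hsum := S''.prob_sum s hs
  have hsummable : Summable (fun t : { t : Tr // t ∈ S''.transitions ∧ S''.source t = s } =>
      S''.prob t.1) := by
    by_contra h
    rw [tsum_eq_zero_of_not_summable h] at hsum
    norm_num at hsum
  set F' : Finset { t : Tr // t ∈ S''.transitions ∧ S''.source t = s } :=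
    F.attach.map ⟨fun t => ⟨t.1, hF t.1 t.2⟩, by
      intro a b hab
      exact Subtype.ext (by simpa using congrArg Subtype.val hab)⟩ with hF'
  have hsum_eq : ∑ t ∈ F', S''.prob t.1 = ∑ t ∈ F, S''.prob t := by
    rw [hF', Finset.sum_map]
    exact Finset.sum_attach F (fun t => S''.prob t)
  rw [← hsum_eq, ← hsum]
  exact Summable.sum_le_tsum F' (fun t _ => le_of_lt (S''.prob_pos t.1 t.2.1)) hsummable

open Classical in
/-- The explored transitions out of `s`. -/
noncomputable def outT (S : PTS State Tr AP) (T : Finset Tr) (s : State) : Finset Tr :=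
  T.filter (fun t => S.source t = s)

open Classical in
theorem outP_eq_sum (S : PTS State Tr AP) (T : Finset Tr) (s : State) :
    outP S T s = ∑ t ∈ outT S T s, S.prob t := rfl

theorem mem_outT (S : PTS State Tr AP) (T : Finset Tr) (s : State) (t : Tr) :
    t ∈ outT S T s ↔ t ∈ T ∧ S.source t = s := by
  classical
  simp [outT]

theorem outP_nonneg (S : PTS State Tr AP) (T : Finset Tr) (hT : ↑T ⊆ S.transitions)
    (s : State) : 0 ≤ outP S T s := by
  rw [outP_eq_sum]
  exact Finset.sum_nonneg fun t ht =>
    le_of_lt (S.prob_pos t (hT ((mem_outT S T s t).mp ht).1))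

theorem outP_le_one (S : PTS State Tr AP) (T : Finset Tr) (hT : ↑T ⊆ S.transitions)
    (s : State) (hs : s ∈ S.states) : outP S T s ≤ 1 := by
  rw [outP_eq_sum]
  exact sum_prob_le_one S s hs _ (fun t ht =>
    ⟨hT ((mem_outT S T s t).mp ht).1, ((mem_outT S T s t).mp ht).2⟩)

/-- If moreover there is an unexplored transition out of `s` (in an extension
`S''` agreeing with `S` on `T`), the explored outgoing probability is < 1. -/
theorem outP_lt_one (S S'' : PTS State Tr AP) (T : Finset Tr)
    (hTsub : ∀ t ∈ T, t ∈ S''.transitions)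
    (hagree : ∀ t ∈ T, S''.source t = S.source t ∧ S''.prob t = S.prob t)
    (s : State) (hs : s ∈ S''.states) (t' : Tr) (ht' : t' ∈ S''.transitions)
    (ht'T : t' ∉ T) (hsrc' : S''.source t' = s) :
    outP S T s < 1 := by
  classical
  have hkey : ∑ t ∈ insert t' (outT S T s), S''.prob t ≤ 1 := by
    apply sum_prob_le_one S'' s hs
    intro t ht
    rcases Finset.mem_insert.mp ht with rfl | ht
    · exact ⟨ht', hsrc'⟩
    · have h1 := (mem_outT S T s t).mp ht
      refine ⟨hTsub t h1.1, ?_⟩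
      rw [(hagree t h1.1).1, h1.2]
  have hnotmem : t' ∉ outT S T s := by
    intro h
    exact ht'T ((mem_outT S T s t').mp h).1
  rw [Finset.sum_insert hnotmem] at hkey
  have hsum_eq : ∑ t ∈ outT S T s, S''.prob t = outP S T s := by
    rw [outP_eq_sum]
    apply Finset.sum_congr rfl
    intro t ht
    exact (hagree t ((mem_outT S T s t).mp ht).1).2
  rw [hsum_eq] at hkey
  have hpos : 0 < S''.prob t' := S''.prob_pos t' ht'
  linarith

end AuxSum

section AuxTransfer

variable {State Tr AP : Type}

/-- An execution using only explored transitions is an execution of any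
system agreeing with `S` on `T`. -/
theorem isExec_transfer (S S'' S''' : PTS State Tr AP) (T : Finset Tr)
    (h2 : ∀ t ∈ T, S''.source t = S.source t ∧ S''.target t = S.target t)
    (hi2 : S''.init = S.init)
    (h3sub : ∀ t ∈ T, t ∈ S'''.transitions)
    (h3 : ∀ t ∈ T, S'''.source t = S.source t ∧ S'''.target t = S.target t)
    (hi3 : S'''.init = S.init)
    (e : ℕ → Tr) (hex : S''.IsExec e) (hmem : ∀ i, e i ∈ T) : S'''.IsExec e := by
  obtain ⟨htr, hsrc, hchain⟩ := hex
  refine ⟨fun i => h3sub _ (hmem i), ?_, ?_⟩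
  · rw [(h3 _ (hmem 0)).1, ← (h2 _ (hmem 0)).1, hsrc, hi2, hi3]
  · intro i
    rw [(h3 _ (hmem i)).2, (h3 _ (hmem (i + 1))).1, ← (h2 _ (hmem i)).2,
      ← (h2 _ (hmem (i + 1))).1]
    exact hchain i

/-- The trace of an all-explored execution only depends on the data of `S`. -/
theorem traceOf_eq (S S'' : PTS State Tr AP) (T : Finset Tr)
    (hagree : ∀ t ∈ T, S''.source t = S.source t)
    (hlabs : ∀ t ∈ T, S''.label (S.source t) = S.label (S.source t))
    (e : ℕ → Tr) (hmem : ∀ i, e i ∈ T) :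
    S''.traceOf e = fun i => S.label (S.source (e i)) := by
  funext i
  show S''.label (S''.source (e i)) = _
  rw [hagree _ (hmem i), hlabs _ (hmem i)]

theorem endSt_mem_states (S'' : PTS State Tr AP) :
    ∀ (l : List Tr) (s : State), WordOK S'' s l → s ∈ S''.states →
      endSt S'' s l ∈ S''.states := by
  intro l
  induction l with
  | nil => intro s _ hs; exact hs
  | cons t l ih =>
      rintro s ⟨ht, -, hl⟩ -
      exact ih _ hl (S''.target_mem t ht)

theorem list_prod_pos : ∀ (L : List ℝ), (∀ x ∈ L, 0 < x) → 0 < L.prod := by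
  intro L
  induction L with
  | nil => intro _; simp
  | cons a L ih =>
      intro h
      rw [List.prod_cons]
      exact mul_pos (h a (by simp)) (ih fun x hx => h x (by simp [hx]))

theorem pow_le_list_prod (c : ℝ) (hc : 0 ≤ c) :
    ∀ (L : List ℝ), (∀ x ∈ L, c ≤ x) → c ^ L.length ≤ L.prod := by
  intro L
  induction L with
  | nil => intro _; simp
  | cons a L ih =>
      intro h
      rw [List.prod_cons, List.length_cons, pow_succ, mul_comm (c ^ L.length) c]
      exact mul_le_mul (h a (by simp)) (ih fun x hx => h x (by simp [hx]))
        (pow_nonneg hc _) (le_trans hc (h a (by simp)))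

/-- A cylinder of a longer list is contained in that of a prefix. -/
theorem cyl_mono (S : PTS State Tr AP) (l l' : List Tr) (m : ℕ)
    (hpre : l = l'.take m) : S.Cyl l' ⊆ S.Cyl l := by
  rintro e ⟨hex, hpref⟩
  refine ⟨hex, ?_⟩
  intro i hi
  subst hpre
  have hi' : i < l'.length := lt_of_lt_of_le hi (by simpa using List.length_take_le m l')
  have : (l'.take m).get ⟨i, hi⟩ = l'.get ⟨i, hi'⟩ := by
    simp [List.getElem_take]
  rw [this, hpref i hi']

end AuxTransfer

/-- If `T` has not found a violation of the LTL⁺ formula `φ`,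
then `μ_{S_T}(T^ω ∩ Exec_{S_T}) ≤ prog_S(T, φ)`. -/
theorem explored_measure_le_prog {State Tr AP : Type} (S ST : PTS State Tr AP)
    (T : Finset Tr) (hT : ↑T ⊆ S.transitions) (hST : IsMinExt S T ST)
    (φ : LTLPlus AP)
    (M : PTS State Tr AP → MeasureTheory.Measure (ℕ → Tr))
    (hM : ∀ S', CylSpec S' (M S'))
    (hMST : CylSpec ST (M ST))
    (hnv : NotFoundViolation S T { ρ | LTLSat φ ρ }) :
    M ST { e : ℕ → Tr | (∀ i, e i ∈ T) ∧ ST.IsExec e } ≤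
      progM M S T { ρ | LTLSat φ ρ } := by
  classical
  obtain ⟨S₀, hext₀, hsat₀⟩ := hnv
  obtain ⟨sbot, tbot, ts, hsb, htsT, htbT, htsne, hinj, hstates, htrans, hinitST,
    hTd, htsd, hsrctb, htgttb, hprobtb, hlabsb, hlabST⟩ := hST
  rw [progM]
  refine le_iInf ?_
  rintro ⟨S', hext'⟩
  simp only
  set φs : Set (ℕ → Set AP) := { ρ | LTLSat φ ρ } with hφs
  set X : Set (ℕ → Tr) := { e | (∀ i, e i ∈ T) ∧ ST.IsExec e } with hX
  -- basic agreement facts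
  have hagST : ∀ t ∈ T, ST.source t = S.source t ∧ ST.target t = S.target t :=
    fun t ht => ⟨(hTd t ht).1, (hTd t ht).2.1⟩
  have hTsubST : ∀ t ∈ T, t ∈ ST.transitions := by
    intro t ht
    rw [htrans]
    exact Or.inl (Or.inl ht)
  obtain ⟨hsub', hinit', hd'⟩ := hext'
  have hag' : ∀ t ∈ T, S'.source t = S.source t ∧ S'.target t = S.target t :=
    fun t ht => ⟨(hd' t ht).1, (hd' t ht).2.1⟩
  obtain ⟨hsub₀, hinit₀, hd₀⟩ := hext₀
  have hag₀ : ∀ t ∈ T, S₀.source t = S.source t ∧ S₀.target t = S.target t :=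
    fun t ht => ⟨(hd₀ t ht).1, (hd₀ t ht).2.1⟩
  -- the degenerate case: no explored transition out of the initial state
  by_cases ht₀ : ∃ t₀ ∈ T, S.source t₀ = S.init
  case neg =>
    have hXempty : X = (∅ : Set (ℕ → Tr)) := by
      rw [Set.eq_empty_iff_forall_notMem]
      rintro e ⟨hmem, hex⟩
      refine ht₀ ⟨e 0, hmem 0, ?_⟩
      rw [← (hagST (e 0) (hmem 0)).1, hex.2.1, hinitST]
    rw [hXempty]
    simp
  obtain ⟨t₀, ht₀T, ht₀src⟩ := ht₀
  -- state membership facts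
  have hsrcSTS : ∀ t ∈ T, S.source t ∈ STStates S T :=
    fun t ht => Or.inl (Or.inl ⟨t, ht, rfl⟩)
  have htgtSTS : ∀ t ∈ T, S.target t ∈ STStates S T :=
    fun t ht => Or.inl (Or.inr ⟨t, ht, rfl⟩)
  have hinitSTS : S.init ∈ STStates S T := Or.inr rfl
  set V : Finset State := (T.image S.source ∪ T.image S.target) ∪ {S.init} with hV
  have hVmem : ∀ s, s ∈ V ↔ s ∈ STStates S T := by
    intro s
    simp only [hV, Finset.mem_union, Finset.mem_image, Finset.mem_singleton, STStates,
      Set.mem_union, Set.mem_image, Finset.mem_coe, Set.mem_singleton_iff]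
  have hVcard : 0 < V.card := Finset.card_pos.mpr ⟨S.init, (hVmem S.init).mpr hinitSTS⟩
  have htgtV : ∀ t ∈ T, S.target t ∈ V := fun t ht => (hVmem _).mpr (htgtSTS t ht)
  -- labels on explored states agree in any extension
  have labext : ∀ (S'' : PTS State Tr AP), (∀ t ∈ T, S''.source t = S.source t ∧
        S''.label (S''.source t) = S.label (S.source t) ∧
        S''.label (S''.target t) = S.label (S.target t) ∧ S''.target t = S.target t) →
      ∀ s ∈ STStates S T, S''.label s = S.label s := by
    intro S'' hdat s hs
    rcases hs with (⟨t, ht, rfl⟩ | ⟨t, ht, rfl⟩) | rfl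
    · have h := (hdat t ht).2.1
      rwa [(hdat t ht).1] at h
    · have h := (hdat t ht).2.2.1
      rwa [(hdat t ht).2.2.2] at h
    · have h := (hdat t₀ ht₀T).2.1
      rw [(hdat t₀ ht₀T).1, ht₀src] at h
      exact h
  have hlabS' : ∀ s ∈ STStates S T, S'.label s = S.label s := by
    apply labext
    intro t ht
    exact ⟨(hd' t ht).1, (hd' t ht).2.2.2.1, (hd' t ht).2.2.2.2, (hd' t ht).2.1⟩
  have hlabS₀ : ∀ s ∈ STStates S T, S₀.label s = S.label s := by
    apply labext
    intro t ht
    exact ⟨(hd₀ t ht).1, (hd₀ t ht).2.2.2.1, (hd₀ t ht).2.2.2.2, (hd₀ t ht).2.1⟩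
  -- the sink path
  have sink_exec : ∀ (u : List Tr), TWord S T S.init u → outP S T (endSt S S.init u) < 1 →
      ST.IsExec (glue (u ++ [ts (endSt S S.init u)]) (fun _ => tbot)) ∧
      ST.traceOf (glue (u ++ [ts (endSt S S.init u)]) (fun _ => tbot)) =
        (fun i => if h : i < u.length then S.label (S.source (u.get ⟨i, h⟩))
          else if i = u.length then S.label (endSt S S.init u) else (∅ : Set AP)) := by
    intro u hword hout
    set s := endSt S S.init u with hs
    have hsmem : s ∈ STStates S T := by
      rw [← hVmem]
      rw [hs]
      exact endSt_mem S T V htgtV u S.init hword ((hVmem _).mpr hinitSTS)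
    have htsdat := htsd s hsmem hout
    have htsmem : ts s ∈ ST.transitions := by
      rw [htrans]
      exact Or.inl (Or.inr ⟨s, ⟨hsmem, hout⟩, rfl⟩)
    have htbmem : tbot ∈ ST.transitions := by
      rw [htrans]
      exact Or.inr rfl
    obtain ⟨hwOK, hend⟩ := tword_wordOK S ST T hTsubST hagST u S.init hword
    have hwOK2 : WordOK ST S.init (u ++ [ts s]) := by
      rw [wordOK_append]
      refine ⟨hwOK, htsmem, ?_, trivial⟩
      rw [hend, ← hs]
      exact htsdat.1
    have hendbot : endSt ST S.init (u ++ [ts s]) = sbot := by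
      rw [endSt_append]
      show endSt ST (ST.target (ts s)) [] = sbot
      rw [htsdat.2.1]
      rfl
    have hbotexec : IsExecFrom ST sbot (fun _ => tbot) :=
      ⟨fun _ => htbmem, hsrctb, fun _ => by rw [htgttb, hsrctb]⟩
    have hexec : ST.IsExec (glue (u ++ [ts s]) (fun _ => tbot)) := by
      have h := glue_execFrom ST (u ++ [ts s]) S.init _ hwOK2 (by rw [hendbot]; exact hbotexec)
      rw [PTS.IsExec, hinitST]
      exact h
    refine ⟨hexec, ?_⟩
    funext i
    show ST.label (ST.source (glue (u ++ [ts s]) (fun _ => tbot) i)) = _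
    by_cases h1 : i < u.length
    · have hlen : i < (u ++ [ts s]).length := by
        rw [List.length_append]
        omega
      rw [glue_lt _ _ i hlen]
      have hget : (u ++ [ts s]).get ⟨i, hlen⟩ = u.get ⟨i, h1⟩ := by
        simp [List.getElem_append_left h1]
      rw [hget, dif_pos h1]
      have hti : u.get ⟨i, h1⟩ ∈ T := tword_memT S T u _ hword _ (List.get_mem u _)
      rw [(hagST _ hti).1]
      exact hlabST _ (hsrcSTS _ hti)
    · by_cases h2 : i = u.length
      · subst h2
        have hlen : u.length < (u ++ [ts s]).length := by
          rw [List.length_append, List.length_singleton]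
          omega
        rw [glue_lt _ _ _ hlen]
        have hget : (u ++ [ts s]).get ⟨u.length, hlen⟩ = ts s := by
          simp
        rw [hget, dif_neg (lt_irrefl u.length), if_pos rfl, htsdat.1]
        exact hlabST _ hsmem
      · have hlen : (u ++ [ts s]).length ≤ i := by
          rw [List.length_append]
          simp only [List.length_singleton]
          omega
        rw [glue_ge _ _ i hlen, dif_neg h1, if_neg h2, hsrctb]
        exact hlabsb
  -- all-explored executions of the minimal extension satisfy φ
  have satT : ∀ e, ST.IsExec e → (∀ i, e i ∈ T) → LTLSat φ (ST.traceOf e) := by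
    intro e hex hmem
    have hex₀ : S₀.IsExec e :=
      isExec_transfer S ST S₀ T hagST hinitST hsub₀ hag₀ hinit₀ e hex hmem
    have hsat := hsat₀ e hex₀
    have h₀ : S₀.traceOf e = fun i => S.label (S.source (e i)) :=
      traceOf_eq S S₀ T (fun t ht => (hag₀ t ht).1)
        (fun t ht => hlabS₀ _ (hsrcSTS t ht)) e hmem
    have hST' : ST.traceOf e = fun i => S.label (S.source (e i)) :=
      traceOf_eq S ST T (fun t ht => (hagST t ht).1)
        (fun t ht => hlabST _ (hsrcSTS t ht)) e hmem
    have : LTLSat φ (S₀.traceOf e) := hsat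
    rw [h₀] at this
    rw [hST']
    exact this
  -- an execution of ST leaving T is exactly a sink path
  have exit_eq : ∀ e, ST.IsExec e → ∀ k, (∀ i < k, e i ∈ T) → e k ∉ T →
      outP S T (endSt S S.init (trunc e k)) < 1 ∧
      e = glue (trunc e k ++ [ts (endSt S S.init (trunc e k))]) (fun _ => tbot) := by
    intro e hex k hklt hknot
    obtain ⟨hwu, hend⟩ := tword_trunc S ST T hagST hinitST e hex k hklt
    set s := endSt S S.init (trunc e k) with hs
    have hsmem : s ∈ STStates S T := by
      rw [← hVmem, hs]
      exact endSt_mem S T V htgtV _ S.init hwu ((hVmem _).mpr hinitSTS)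
    -- classify transitions whose source is an explored state / the sink
    have cls : ∀ m, ST.source (e m) = sbot → e m = tbot := by
      intro m hm
      have hcl := hex.1 m
      rw [htrans] at hcl
      rcases hcl with (h | h) | h
      · exfalso
        apply hsb
        have hmem2 : S.source (e m) ∈ STStates S T := hsrcSTS _ h
        rw [(hagST _ h).1] at hm
        rwa [hm] at hmem2
      · obtain ⟨s'', hs''⟩ := h
        exfalso
        apply hsb
        have hsrc : ST.source (ts s'') = s'' := (htsd s'' hs''.1.1 hs''.1.2).1
        rw [← hs''.2, hsrc] at hm
        rw [← hm]
        exact hs''.1.1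
      · exact h
    have hcl := hex.1 k
    rw [htrans] at hcl
    have hek : e k = ts s ∧ outP S T s < 1 := by
      rcases hcl with (h | h) | h
      · exact absurd h hknot
      · obtain ⟨s'', ⟨hs''mem, hs''out⟩, heq⟩ := h
        have hsrc : ST.source (ts s'') = s'' := (htsd s'' hs''mem hs''out).1
        have : s = s'' := by
          rw [hend, ← heq, hsrc]
        rw [this]
        exact ⟨heq.symm, hs''out⟩
      · exfalso
        apply hsb
        have h2 : ST.source (e k) = sbot := by
          rw [Set.mem_singleton_iff.mp h, hsrctb]
        rw [hend, h2] at hsmem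
        exact hsmem
    have hbot : ∀ j, e (k + 1 + j) = tbot := by
      intro j
      induction j with
      | zero =>
          apply cls
          have : ST.source (e (k + 1)) = ST.target (e k) := (hex.2.2 k).symm
          rw [show k + 1 + 0 = k + 1 from rfl, this, hek.1, (htsd s hsmem hek.2).2.1]
      | succ j ih =>
          apply cls
          have : ST.source (e (k + 1 + (j + 1))) = ST.target (e (k + 1 + j)) := by
            rw [show k + 1 + (j + 1) = (k + 1 + j) + 1 from rfl]
            exact (hex.2.2 _).symm
          rw [this, ih, htgttb]
    refine ⟨hek.2, ?_⟩
    funext i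
    have hlen : (trunc e k ++ [ts s]).length = k + 1 := by
      rw [List.length_append, trunc_length]
      rfl
    rcases lt_trichotomy i k with hik | hik | hik
    · have hi' : i < (trunc e k ++ [ts s]).length := by omega
      rw [glue_lt _ _ i hi']
      have hik2 : i < (trunc e k).length := by rw [trunc_length]; exact hik
      have : (trunc e k ++ [ts s]).get ⟨i, hi'⟩ = (trunc e k).get ⟨i, hik2⟩ := by
        simp [List.getElem_append_left hik2]
      rw [this, trunc_get]
    · have hi' : i < (trunc e k ++ [ts s]).length := by omega
      rw [glue_lt _ _ i hi']
      have h0 : i = (trunc e k).length := by rw [trunc_length]; exact hik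
      have hgg : (trunc e k ++ [ts s]).get ⟨i, hi'⟩ = ts s := by
        simp [h0]
      rw [hgg, hik, hek.1]
    · have hi' : (trunc e k ++ [ts s]).length ≤ i := by omega
      rw [glue_ge _ _ i hi']
      have : i = k + 1 + (i - k - 1) := by omega
      rw [this, hbot (i - k - 1)]
  set Good : List Tr → Prop := fun l => ∀ e ∈ ST.Cyl l, ST.SatPath e φs with hGood
  have bad_reach : ∀ l, TWord S T S.init l → ¬ Good l →
      ∃ q, TWord S T (endSt S S.init l) q ∧ q.length < V.card ∧
        outP S T (endSt S (endSt S S.init l) q) < 1 := by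
    intro l hword hbad
    have hbad2 : ∃ e ∈ ST.Cyl l, ¬ ST.SatPath e φs := by
      by_contra hc
      push_neg at hc
      apply hbad
      show ∀ e ∈ ST.Cyl l, ST.SatPath e φs
      exact hc
    obtain ⟨e, hecyl, hnsat⟩ := hbad2
    obtain ⟨hex, hpref⟩ := hecyl
    by_cases hall : ∀ i, e i ∈ T
    · exact absurd (satT e hex hall) hnsat
    · push_neg at hall
      set k := Nat.find hall with hk
      have hknot : e k ∉ T := Nat.find_spec hall
      have hklt : ∀ i < k, e i ∈ T := by
        intro i hi
        by_contra hcon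
        exact Nat.find_min hall hi hcon
      have hlk : l.length ≤ k := by
        by_contra hcon
        push_neg at hcon
        refine hknot ?_
        rw [← hpref k hcon]
        exact tword_memT S T l _ hword _ (List.get_mem l _)
      obtain ⟨hout, -⟩ := exit_eq e hex k hklt hknot
      -- split the prefix of e at l
      set q0 : List Tr := (trunc e k).drop l.length with hq0
      have hltake : l = (trunc e k).take l.length := by
        apply List.ext_get
        · rw [List.length_take, trunc_length]
          omega
        · intro i h1 h2
          have hi : i < l.length := h1
          have hik : i < k := lt_of_lt_of_le hi hlk
          have h3 : i < (trunc e k).length := by rw [trunc_length]; exact hik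
          have : ((trunc e k).take l.length).get ⟨i, h2⟩ = (trunc e k).get ⟨i, h3⟩ := by
            simp [List.getElem_take]
          rw [this, trunc_get, hpref i hi]
      have hsplit : l ++ q0 = trunc e k := by
        rw [hq0]
        nth_rewrite 1 [hltake]
        exact List.take_append_drop l.length (trunc e k)
      have hwk := (tword_trunc S ST T hagST hinitST e hex k hklt).1
      have hw2 : TWord S T S.init (l ++ q0) := by rw [hsplit]; exact hwk
      rw [tword_append] at hw2
      have hout2 : outP S T (endSt S (endSt S S.init l) q0) < 1 := by
        rw [← endSt_append, hsplit]
        exact hout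
      have hinV : endSt S S.init l ∈ V := by
        exact endSt_mem S T V htgtV l S.init hword ((hVmem _).mpr hinitSTS)
      obtain ⟨q, hqw, hqP, hqlen⟩ := tword_shorten S T V htgtV
        (fun st => outP S T st < 1) q0.length q0 (endSt S S.init l) le_rfl hinV hw2.2 hout2
      exact ⟨q, hqw, hqlen, hqP⟩
  have good_transfer : ∀ l, (∀ t ∈ l, t ∈ T) → Good l → ∀ e ∈ S'.Cyl l, S'.SatPath e φs := by
    intro l hl hgood e hecyl
    obtain ⟨hex', hpref⟩ := hecyl
    by_cases hall : ∀ i, e i ∈ T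
    · have hexST : ST.IsExec e :=
        isExec_transfer S S' ST T hag' hinit' hTsubST hagST hinitST e hex' hall
      have hsat : ST.SatPath e φs := hgood e ⟨hexST, hpref⟩
      show S'.traceOf e ∈ φs
      rw [traceOf_eq S S' T (fun t ht => (hag' t ht).1)
        (fun t ht => hlabS' _ (hsrcSTS t ht)) e hall]
      have h2 : ST.traceOf e ∈ φs := hsat
      rwa [traceOf_eq S ST T (fun t ht => (hagST t ht).1)
        (fun t ht => hlabST _ (hsrcSTS t ht)) e hall] at h2
    · push_neg at hall
      set k := Nat.find hall with hk
      have hknot : e k ∉ T := Nat.find_spec hall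
      have hklt : ∀ i < k, e i ∈ T := by
        intro i hi
        by_contra hcon
        exact Nat.find_min hall hi hcon
      have hlk : l.length ≤ k := by
        by_contra hcon
        push_neg at hcon
        refine hknot ?_
        rw [← hpref k hcon]
        exact hl _ (List.get_mem l _)
      obtain ⟨hwu, hend'⟩ := tword_trunc S S' T hag' hinit' e hex' k hklt
      set s := endSt S S.init (trunc e k) with hs
      have hsmemS' : s ∈ S'.states := by
        rw [hend']
        exact S'.source_mem _ (hex'.1 k)
      have hout : outP S T s < 1 := by
        apply outP_lt_one S S' T hsub' (fun t ht => ⟨(hd' t ht).1, (hd' t ht).2.2.1⟩)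
          s hsmemS' (e k) (hex'.1 k) hknot
        exact hend'.symm
      have hsmem : s ∈ STStates S T := by
        rw [← hVmem, hs]
        exact endSt_mem S T V htgtV _ S.init hwu ((hVmem _).mpr hinitSTS)
      obtain ⟨hvexec, hvtrace⟩ := sink_exec (trunc e k) hwu hout
      set v := glue (trunc e k ++ [ts s]) (fun _ => tbot) with hv
      have hvpref : IsPrefixOf l v := by
        intro i hi
        have hik : i < (trunc e k).length := by
          rw [trunc_length]
          exact lt_of_lt_of_le hi hlk
        have hi' : i < (trunc e k ++ [ts s]).length := by
          rw [List.length_append]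
          omega
        rw [hv, glue_lt _ _ i hi']
        have : (trunc e k ++ [ts s]).get ⟨i, hi'⟩ = (trunc e k).get ⟨i, hik⟩ := by
          simp [List.getElem_append_left hik]
        rw [this, trunc_get, hpref i hi]
      have hsatv : ST.SatPath v φs := hgood v ⟨hvexec, hvpref⟩
      have hmono : ∀ n, ST.traceOf v n ⊆ S'.traceOf e n := by
        intro n
        simp only [hvtrace]
        by_cases hn1 : n < (trunc e k).length
        · rw [dif_pos hn1]
          have hnk : n < k := by rwa [trunc_length] at hn1
          have hnT : e n ∈ T := hklt n hnk
          rw [trunc_get]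
          show S.label (S.source (e n)) ⊆ S'.label (S'.source (e n))
          rw [(hag' _ hnT).1, hlabS' _ (hsrcSTS _ hnT)]
        · rw [dif_neg hn1]
          by_cases hn2 : n = (trunc e k).length
          · rw [if_pos hn2]
            show S.label s ⊆ S'.label (S'.source (e n))
            have hnk : n = k := by rwa [trunc_length] at hn2
            rw [hnk, ← hend', hlabS' _ hsmem]
          · rw [if_neg hn2]
            exact Set.empty_subset _
      show S'.traceOf e ∈ φs
      have hsatv' : LTLSat φ (ST.traceOf v) := hsatv
      exact ltlsat_mono φ _ _ hmono hsatv'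
  have prefexec_S' : ∀ l, TWord S T S.init l → ST.IsPrefExec l → S'.IsPrefExec l := by
    rintro l hword ⟨e, hex, hpref⟩
    by_cases hall : ∀ i, e i ∈ T
    · exact ⟨e, isExec_transfer S ST S' T hagST hinitST hsub' hag' hinit' e hex hall, hpref⟩
    · push_neg at hall
      have hfind : ∃ k, e k ∉ T := hall
      set k := Nat.find hfind with hk
      have hknot : e k ∉ T := Nat.find_spec hfind
      have hklt : ∀ i < k, e i ∈ T := by
        intro i hi
        by_contra hcon
        exact Nat.find_min hfind hi hcon
      have hlk : l.length ≤ k := by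
        by_contra hcon
        push_neg at hcon
        refine hknot ?_
        rw [← hpref k hcon]
        exact tword_memT S T l _ hword _ (List.get_mem l _)
      have hwu := (tword_trunc S ST T hagST hinitST e hex k hklt).1
      obtain ⟨hwOK, hend⟩ := tword_wordOK S S' T hsub' hag' (trunc e k) S.init hwu
      have hinitmem : S.init ∈ S'.states := by
        rw [← hinit']
        exact S'.init_mem
      have hsu : endSt S S.init (trunc e k) ∈ S'.states := by
        rw [← hend]
        exact endSt_mem_states S' (trunc e k) S.init hwOK hinitmem
      obtain ⟨f, hf⟩ := exists_execFrom S' (endSt S S.init (trunc e k)) hsu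
      have hglue : IsExecFrom S' S.init (glue (trunc e k) f) := by
        apply glue_execFrom S' (trunc e k) S.init f hwOK
        rw [hend]
        exact hf
      refine ⟨glue (trunc e k) f, ?_, ?_⟩
      · show S'.IsExec _
        have : S'.init = S.init := hinit'
        rw [PTS.IsExec, this]
        exact hglue
      · intro i hi
        have hik : i < (trunc e k).length := by
          rw [trunc_length]
          exact lt_of_lt_of_le hi hlk
        rw [glue_lt _ f i hik, trunc_get, hpref i hi]
  have tword_of : ∀ l, (∀ t ∈ l, t ∈ T) → ST.IsPrefExec l → TWord S T S.init l := by
    rintro l hl ⟨e, hex, hpref⟩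
    have hmem : ∀ i < l.length, e i ∈ T := by
      intro i hi
      rw [← hpref i hi]
      exact hl _ (List.get_mem l _)
    have h := (tword_trunc S ST T hagST hinitST e hex l.length hmem).1
    have hle : trunc e l.length = l := by
      apply List.ext_get (by rw [trunc_length])
      intro i h1 h2
      rw [trunc_get, hpref i h2]
    rwa [hle] at h
  -- weights
  set Wt : List Tr → ℝ := fun l => (l.map S.prob).prod with hWt
  have Wpos : ∀ l : List Tr, (∀ t ∈ l, t ∈ T) → 0 < Wt l := by
    intro l hl
    apply list_prod_pos
    intro x hx
    obtain ⟨t, ht, rfl⟩ := List.mem_map.mp hx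
    exact S.prob_pos t (hT (hl t ht))
  have cylST_eq : ∀ l, (∀ t ∈ l, t ∈ T) → ST.IsPrefExec l →
      M ST (ST.Cyl l) = ENNReal.ofReal (Wt l) := by
    intro l hl hpe
    rw [hMST l hpe]
    congr 1
    rw [hWt]
    congr 1
    exact List.map_congr_left fun t ht => (hTd t (hl t ht)).2.2
  have cylS'_eq : ∀ l, (∀ t ∈ l, t ∈ T) → S'.IsPrefExec l →
      M S' (S'.Cyl l) = ENNReal.ofReal (Wt l) := by
    intro l hl hpe
    rw [hM S' l hpe]
    congr 1
    rw [hWt]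
    congr 1
    exact List.map_congr_left fun t ht => (hd' t (hl t ht)).2.2.1
  -- the finsets of good and bad explored words
  set cand : ℕ → Finset (List Tr) := fun n => (finite_Tlists T n).toFinset with hcand
  have cand_mem : ∀ n (l : List Tr), l ∈ cand n ↔ l.length = n ∧ ∀ t ∈ l, t ∈ T := by
    intro n l
    rw [hcand]
    exact Set.Finite.mem_toFinset _
  set GSet : ℕ → Finset (List Tr) :=
    fun n => (cand n).filter (fun l => ST.IsPrefExec l ∧ Good l) with hGSet
  set BSet : ℕ → Finset (List Tr) :=
    fun n => (cand n).filter (fun l => ST.IsPrefExec l ∧ ¬ Good l) with hBSet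
  have cover : ∀ n, X ⊆ (⋃ l ∈ GSet n, ST.Cyl l) ∪ (⋃ l ∈ BSet n, ST.Cyl l) := by
    intro n
    rintro e ⟨hmem, hex⟩
    have hcand : trunc e n ∈ cand n := by
      rw [cand_mem]
      refine ⟨trunc_length e n, ?_⟩
      intro t ht
      obtain ⟨i, -, rfl⟩ := List.mem_map.mp ht
      exact hmem i
    have hpe : ST.IsPrefExec (trunc e n) := ⟨e, hex, isPrefixOf_trunc e n⟩
    have hecyl : e ∈ ST.Cyl (trunc e n) := ⟨hex, isPrefixOf_trunc e n⟩
    by_cases hg : Good (trunc e n)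
    · left
      exact Set.mem_biUnion (Finset.mem_filter.mpr ⟨hcand, hpe, hg⟩) hecyl
    · right
      exact Set.mem_biUnion (Finset.mem_filter.mpr ⟨hcand, hpe, hg⟩) hecyl
  have goodbound : ∀ n, M ST (⋃ l ∈ GSet n, ST.Cyl l) ≤ M S' (S'.BPhi T φs) := by
    intro n
    have hlen : ∀ l ∈ GSet n, l.length = n := by
      intro l hl
      exact ((cand_mem n l).mp (Finset.mem_filter.mp hl).1).1
    have hmemT : ∀ l ∈ GSet n, ∀ t ∈ l, t ∈ T := by
      intro l hl
      exact ((cand_mem n l).mp (Finset.mem_filter.mp hl).1).2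
    have hpe : ∀ l ∈ GSet n, ST.IsPrefExec l := by
      intro l hl
      exact (Finset.mem_filter.mp hl).2.1
    have hgood : ∀ l ∈ GSet n, Good l := by
      intro l hl
      exact (Finset.mem_filter.mp hl).2.2
    rw [measure_biUnion_cyls (M ST) ST n (GSet n) hlen]
    have hcong : ∀ l ∈ GSet n, M ST (ST.Cyl l) = M S' (S'.Cyl l) := by
      intro l hl
      rw [cylST_eq l (hmemT l hl) (hpe l hl), cylS'_eq l (hmemT l hl)
        (prefexec_S' l (tword_of l (hmemT l hl) (hpe l hl)) (hpe l hl))]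
    rw [Finset.sum_congr rfl hcong]
    rw [← measure_biUnion_cyls (M S') S' n (GSet n) hlen]
    apply measure_mono
    intro x hx
    simp only [Set.mem_iUnion] at hx
    obtain ⟨l, hl, hcyl⟩ := hx
    apply Set.mem_biUnion _ hcyl
    show (∀ t ∈ l, t ∈ T) ∧ ∀ e ∈ S'.Cyl l, S'.SatPath e φs
    exact ⟨hmemT l hl, good_transfer l (hmemT l hl) (hgood l hl)⟩
  -- base case: the empty list is a prefix of an execution
  have pe0 : ST.IsPrefExec ([] : List Tr) := by
    obtain ⟨f, hf⟩ := exists_execFrom ST ST.init ST.init_mem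
    exact ⟨f, hf, fun i h => by simp at h⟩
  by_cases hLKne : ((V.filter (fun s => outP S T s < 1))).Nonempty
  case neg =>
    -- no leaky states: all explored prefixes are good
    have hallgood : ∀ l, (∀ t ∈ l, t ∈ T) → ST.IsPrefExec l → Good l := by
      intro l hl hpe
      by_contra hbad
      obtain ⟨q, hq, -, hout⟩ := bad_reach l (tword_of l hl hpe) hbad
      refine hLKne ⟨endSt S (endSt S S.init l) q, Finset.mem_filter.mpr ⟨?_, hout⟩⟩
      apply endSt_mem S T V htgtV q _ hq
      apply endSt_mem S T V htgtV l _ (tword_of l hl hpe)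
      exact (hVmem _).mpr hinitSTS
    have hBLempty : BSet 0 = ∅ := by
      rw [hBSet]
      rw [Finset.filter_eq_empty_iff]
      rintro l hl
      obtain ⟨hlen, hmem⟩ := (cand_mem 0 l).mp hl
      push_neg
      intro hpe
      exact hallgood l hmem hpe
    calc M ST X ≤ M ST ((⋃ l ∈ GSet 0, ST.Cyl l) ∪ (⋃ l ∈ BSet 0, ST.Cyl l)) :=
          measure_mono (cover 0)
      _ ≤ M ST (⋃ l ∈ GSet 0, ST.Cyl l) + M ST (⋃ l ∈ BSet 0, ST.Cyl l) := measure_union_le _ _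
      _ ≤ M S' (S'.BPhi T φs) + 0 := by
          rw [hBLempty]
          simp only [Finset.notMem_empty, Set.iUnion_of_empty, Set.iUnion_empty]
          rw [measure_empty]
          exact add_le_add (goodbound 0) le_rfl
      _ = M S' (S'.BPhi T φs) := add_zero _
  -- main case: there are leaky states
  set LK : Finset State := V.filter (fun s => outP S T s < 1) with hLK
  have hTne : T.Nonempty := ⟨t₀, ht₀T⟩
  set pmin : ℝ := (T.image S.prob).min' (hTne.image _) with hpmin
  have hpmin_le : ∀ t ∈ T, pmin ≤ S.prob t := by
    intro t ht
    exact Finset.min'_le _ _ (Finset.mem_image_of_mem _ ht)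
  have hpmin_pos : 0 < pmin := by
    obtain ⟨t₁, ht₁, heq⟩ := Finset.mem_image.mp ((T.image S.prob).min'_mem (hTne.image _))
    rw [hpmin, ← heq]
    exact S.prob_pos t₁ (hT ht₁)
  have hpmin_le1 : pmin ≤ 1 := le_trans (hpmin_le t₀ ht₀T) (S.prob_le_one t₀ (hT ht₀T))
  set δ : ℝ := (LK.image (fun s => 1 - outP S T s)).min' (hLKne.image _) with hδ
  have hδ_le : ∀ s ∈ LK, δ ≤ 1 - outP S T s := by
    intro s hs
    exact Finset.min'_le _ _ (Finset.mem_image_of_mem _ hs)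
  have hδ_pos : 0 < δ := by
    obtain ⟨s₁, hs₁, heq⟩ :=
      Finset.mem_image.mp ((LK.image (fun s => 1 - outP S T s)).min'_mem (hLKne.image _))
    rw [hδ, ← heq]
    have := (Finset.mem_filter.mp hs₁).2
    linarith
  have hδ_le1 : δ ≤ 1 := by
    obtain ⟨s₁, hs₁⟩ := hLKne
    refine le_trans (hδ_le s₁ hs₁) ?_
    have := outP_nonneg S T hT s₁
    linarith
  set cc : ℝ := pmin ^ (V.card - 1) * δ with hcc
  have hcc_pos : 0 < cc := mul_pos (pow_pos hpmin_pos _) hδ_pos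
  have hcc_le1 : cc ≤ 1 := by
    rw [hcc]
    calc pmin ^ (V.card - 1) * δ ≤ 1 * 1 := by
          apply mul_le_mul _ hδ_le1 (le_of_lt hδ_pos) zero_le_one
          exact pow_le_one₀ (le_of_lt hpmin_pos) hpmin_le1
      _ = 1 := mul_one 1
  set c' : ENNReal := ENNReal.ofReal (1 - cc) with hc'
  have hc'lt1 : c' < 1 := by
    rw [hc']
    rw [← ENNReal.ofReal_one]
    rw [ENNReal.ofReal_lt_ofReal_iff zero_lt_one]
    linarith
  set Surv : ℕ → Set (ℕ → Tr) := fun m => {e | ∀ i < m, e i ∈ T} with hSurv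
  have step : ∀ l, TWord S T S.init l → ST.IsPrefExec l → ¬ Good l →
      M ST (ST.Cyl l ∩ Surv (l.length + V.card)) ≤ c' * ENNReal.ofReal (Wt l) := by
    intro l hword hpe hbadl
    obtain ⟨q, hq, hqlen, hqout⟩ := bad_reach l hword hbadl
    have hwu : TWord S T S.init (l ++ q) := (tword_append S T l q S.init).mpr ⟨hword, hq⟩
    have hout' : outP S T (endSt S S.init (l ++ q)) < 1 := by
      rw [endSt_append]
      exact hqout
    set s₀ := endSt S S.init (l ++ q) with hs₀
    have hs₀mem : s₀ ∈ STStates S T := by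
      rw [← hVmem, hs₀]
      exact endSt_mem S T V htgtV _ S.init hwu ((hVmem _).mpr hinitSTS)
    have hs₀V : s₀ ∈ V := (hVmem _).mpr hs₀mem
    obtain ⟨hvexec, -⟩ := sink_exec (l ++ q) hwu hout'
    set lqt : List Tr := (l ++ q) ++ [ts s₀] with hlqt
    have hpelqt : ST.IsPrefExec lqt :=
      ⟨glue lqt (fun _ => tbot), hvexec, isPrefixOf_glue _ _⟩
    have hmemlq : ∀ t ∈ l ++ q, t ∈ T := tword_memT S T _ _ hwu
    -- weight of the witness cylinder
    have hwt : M ST (ST.Cyl lqt) =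
        ENNReal.ofReal (Wt l * (Wt q * (1 - outP S T s₀))) := by
      rw [hMST lqt hpelqt]
      congr 1
      rw [hlqt, List.map_append, List.map_append, List.prod_append, List.prod_append]
      have h1 : (l.map ST.prob).prod = Wt l := by
        rw [hWt]
        congr 1
        exact List.map_congr_left fun t ht => (hTd t (hmemlq t (by simp [ht]))).2.2
      have h2 : (q.map ST.prob).prod = Wt q := by
        rw [hWt]
        congr 1
        exact List.map_congr_left fun t ht => (hTd t (hmemlq t (by simp [ht]))).2.2
      have h3 : (([ts s₀] : List Tr).map ST.prob).prod = 1 - outP S T s₀ := by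
        simp [(htsd s₀ hs₀mem hout').2.2]
      rw [h1, h2, h3]
      ring
    -- the witness cylinder is inside Cyl l and escapes T
    have hsub1 : ST.Cyl lqt ⊆ ST.Cyl l := by
      apply cyl_mono ST l lqt l.length
      rw [hlqt, List.append_assoc]
      exact (List.take_left (l₁ := l) (l₂ := q ++ [ts s₀])).symm
    have hescape : ∀ e' ∈ ST.Cyl lqt, e' ∉ Surv (l.length + V.card) := by
      rintro e' ⟨hex', hpref'⟩ hsurv
      have hp : (l ++ q).length < lqt.length := by
        rw [hlqt, List.length_append (as := l ++ q), List.length_singleton]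
        omega
      have heq : lqt.get ⟨(l ++ q).length, hp⟩ = e' ((l ++ q).length) := hpref' _ hp
      have hts' : lqt.get ⟨(l ++ q).length, hp⟩ = ts s₀ :=
        List.getElem_concat_length rfl _
      have hlen2 : (l ++ q).length < l.length + V.card := by
        rw [List.length_append]
        omega
      have := hsurv _ hlen2
      rw [← heq, hts'] at this
      exact htsT s₀ this
    have hsub2 : ST.Cyl l ∩ Surv (l.length + V.card) ⊆ ST.Cyl l \ ST.Cyl lqt := by
      rintro e' ⟨h1, h2⟩
      exact ⟨h1, fun hc => hescape e' hc h2⟩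
    have hdiff : M ST (ST.Cyl l \ ST.Cyl lqt) = M ST (ST.Cyl l) - M ST (ST.Cyl lqt) :=
      measure_diff hsub1 (MeasurableSpace.measurableSet_top).nullMeasurableSet
        (by rw [hwt]; exact ENNReal.ofReal_ne_top)
    -- the real inequality
    have hWl : 0 < Wt l := Wpos l (fun t ht => hmemlq t (by simp [ht]))
    have hWq : 0 < Wt q := Wpos q (fun t ht => hmemlq t (by simp [ht]))
    have hccle : cc ≤ Wt q * (1 - outP S T s₀) := by
      rw [hcc]
      have h1 : pmin ^ (V.card - 1) ≤ Wt q := by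
        have hpw : pmin ^ (V.card - 1) ≤ pmin ^ q.length := by
          apply pow_le_pow_of_le_one (le_of_lt hpmin_pos) hpmin_le1
          omega
        refine le_trans hpw ?_
        have := pow_le_list_prod pmin (le_of_lt hpmin_pos) (q.map S.prob) ?_
        · rwa [List.length_map] at this
        · intro x hx
          obtain ⟨t, ht, rfl⟩ := List.mem_map.mp hx
          exact hpmin_le t (hmemlq t (by simp [ht]))
      have h2 : δ ≤ 1 - outP S T s₀ := by
        apply hδ_le
        rw [hLK, Finset.mem_filter]
        exact ⟨hs₀V, hout'⟩
      exact mul_le_mul h1 h2 (le_of_lt hδ_pos) (le_of_lt hWq)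
    have hreal : Wt l - Wt l * (Wt q * (1 - outP S T s₀)) ≤ (1 - cc) * Wt l := by
      have := mul_le_mul_of_nonneg_left hccle (le_of_lt hWl)
      nlinarith
    calc M ST (ST.Cyl l ∩ Surv (l.length + V.card)) ≤ M ST (ST.Cyl l \ ST.Cyl lqt) :=
          measure_mono hsub2
      _ = M ST (ST.Cyl l) - M ST (ST.Cyl lqt) := hdiff
      _ = ENNReal.ofReal (Wt l) - ENNReal.ofReal (Wt l * (Wt q * (1 - outP S T s₀))) := by
          rw [cylST_eq l (fun t ht => hmemlq t (by simp [ht])) hpe, hwt]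
      _ = ENNReal.ofReal (Wt l - Wt l * (Wt q * (1 - outP S T s₀))) := by
          rw [ENNReal.ofReal_sub]
          exact mul_nonneg (le_of_lt hWl) (mul_nonneg (le_of_lt hWq) (by linarith))
      _ ≤ ENNReal.ofReal ((1 - cc) * Wt l) := ENNReal.ofReal_le_ofReal hreal
      _ = c' * ENNReal.ofReal (Wt l) := by
          rw [hc', ← ENNReal.ofReal_mul (by linarith)]
  have decay : ∀ k, M ST (⋃ l ∈ BSet ((k + 1) * V.card), ST.Cyl l) ≤
      c' * M ST (⋃ l ∈ BSet (k * V.card), ST.Cyl l) := by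
    intro k
    set n := k * V.card with hn
    have hn1 : (k + 1) * V.card = n + V.card := by
      rw [hn]
      ring
    have hsub : (⋃ l ∈ BSet ((k + 1) * V.card), ST.Cyl l) ⊆
        ⋃ l ∈ BSet n, (ST.Cyl l ∩ Surv (n + V.card)) := by
      intro e he
      simp only [Set.mem_iUnion] at he
      obtain ⟨l', hl', hecyl⟩ := he
      have hcand' := (Finset.mem_filter.mp hl').1
      have hpe' := (Finset.mem_filter.mp hl').2.1
      have hbad' := (Finset.mem_filter.mp hl').2.2
      obtain ⟨hlen', hmem'⟩ := (cand_mem _ l').mp hcand'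
      have hnle : n ≤ l'.length := by
        rw [hlen', hn]
        exact Nat.mul_le_mul_right _ (Nat.le_succ k)
      set l : List Tr := l'.take n with hl
      have hltake : l = l'.take n := hl
      have hlenl : l.length = n := by
        rw [hl, List.length_take]
        omega
      have hmeml : ∀ t ∈ l, t ∈ T := by
        intro t ht
        exact hmem' t (List.mem_of_mem_take ht)
      have hcylsub : ST.Cyl l' ⊆ ST.Cyl l := cyl_mono ST l l' n hltake
      have hpel : ST.IsPrefExec l := by
        obtain ⟨e'', hex'', hpref''⟩ := hpe'
        exact ⟨e'', hex'', fun i hi => by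
          have hi' : i < l'.length := by
            rw [hlenl] at hi
            omega
          have : l.get ⟨i, hi⟩ = l'.get ⟨i, hi'⟩ := by
            simp [hl, List.getElem_take]
          rw [this, hpref'' i hi']⟩
      have hbadl : ¬ Good l := by
        intro hgl
        apply hbad'
        show ∀ e'' ∈ ST.Cyl l', ST.SatPath e'' φs
        intro e'' he''
        exact hgl e'' (hcylsub he'')
      have hlmem : l ∈ BSet n := by
        rw [hBSet, Finset.mem_filter]
        exact ⟨(cand_mem n l).mpr ⟨hlenl, hmeml⟩, hpel, hbadl⟩
      apply Set.mem_biUnion hlmem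
      refine ⟨hcylsub hecyl, ?_⟩
      intro i hi
      have hi' : i < l'.length := by
        rw [hlen']
        omega
      obtain ⟨-, hpref⟩ := hecyl
      rw [← hpref i hi']
      exact hmem' _ (List.get_mem l' _)
    calc M ST (⋃ l ∈ BSet ((k + 1) * V.card), ST.Cyl l) ≤
          M ST (⋃ l ∈ BSet n, (ST.Cyl l ∩ Surv (n + V.card))) := measure_mono hsub
      _ ≤ ∑ l ∈ BSet n, M ST (ST.Cyl l ∩ Surv (n + V.card)) :=
          measure_biUnion_finset_le _ _
      _ ≤ ∑ l ∈ BSet n, c' * M ST (ST.Cyl l) := by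
          apply Finset.sum_le_sum
          intro l hl
          have hcandl := (Finset.mem_filter.mp hl).1
          have hpel := (Finset.mem_filter.mp hl).2.1
          have hbadl := (Finset.mem_filter.mp hl).2.2
          obtain ⟨hlenl, hmeml⟩ := (cand_mem _ l).mp hcandl
          have hstep := step l (tword_of l hmeml hpel) hpel hbadl
          rw [hlenl] at hstep
          refine le_trans hstep ?_
          rw [cylST_eq l hmeml hpel]
      _ = c' * ∑ l ∈ BSet n, M ST (ST.Cyl l) := by
          rw [Finset.mul_sum]
      _ = c' * M ST (⋃ l ∈ BSet n, ST.Cyl l) := by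
          rw [measure_biUnion_cyls (M ST) ST n (BSet n)
            (fun l hl => ((cand_mem n l).mp (Finset.mem_filter.mp hl).1).1)]
  have abound : ∀ k, M ST (⋃ l ∈ BSet (k * V.card), ST.Cyl l) ≤ c' ^ k := by
    intro k
    induction k with
    | zero =>
        have hsub : (⋃ l ∈ BSet 0, ST.Cyl l) ⊆ ST.Cyl [] := by
          intro e he
          simp only [Set.mem_iUnion] at he
          obtain ⟨l, hl, hel⟩ := he
          have hlen : l.length = 0 := ((cand_mem 0 l).mp (Finset.mem_filter.mp hl).1).1
          rw [List.length_eq_zero_iff.mp hlen] at hel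
          exact hel
        calc M ST (⋃ l ∈ BSet (0 * V.card), ST.Cyl l) = M ST (⋃ l ∈ BSet 0, ST.Cyl l) := by
              rw [Nat.zero_mul]
          _ ≤ M ST (ST.Cyl []) := measure_mono hsub
          _ = ENNReal.ofReal (Wt []) := cylST_eq [] (by simp) pe0
          _ ≤ 1 := by
              rw [hWt]
              simp
          _ = c' ^ 0 := by rw [pow_zero]
    | succ k ih =>
        calc M ST (⋃ l ∈ BSet ((k + 1) * V.card), ST.Cyl l) ≤
              c' * M ST (⋃ l ∈ BSet (k * V.card), ST.Cyl l) := decay k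
          _ ≤ c' * c' ^ k := by
              exact mul_le_mul_right ih c'
          _ = c' ^ (k + 1) := by rw [pow_succ, mul_comm]
  have key : ∀ k, M ST X ≤ M S' (S'.BPhi T φs) + c' ^ k := by
    intro k
    calc M ST X ≤ M ST ((⋃ l ∈ GSet (k * V.card), ST.Cyl l) ∪
          (⋃ l ∈ BSet (k * V.card), ST.Cyl l)) := measure_mono (cover _)
      _ ≤ M ST (⋃ l ∈ GSet (k * V.card), ST.Cyl l) +
          M ST (⋃ l ∈ BSet (k * V.card), ST.Cyl l) := measure_union_le _ _
      _ ≤ M S' (S'.BPhi T φs) + c' ^ k := add_le_add (goodbound _) (abound k)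
  have hlim : Filter.Tendsto (fun k : ℕ => M S' (S'.BPhi T φs) + c' ^ k)
      Filter.atTop (nhds (M S' (S'.BPhi T φs) + 0)) := by
    apply Filter.Tendsto.const_add
    exact ENNReal.tendsto_pow_atTop_nhds_zero_of_lt_one hc'lt1
  rw [add_zero] at hlim
  exact ge_of_tendsto hlim (Filter.Eventually.of_forall key)
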